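/- The density-flux dissipation coefficient of Chandrashekar's entropy-conservative Euler flux relative to the central flux is indefinite: for grid states with ρ_i, ρ_{i+1} > 0, ρ_i ≠ ρ_{i+1}, one has the identity 2(⟨ρv⟩ − ρ^ln⟨v⟩)/(ρ_{i+1}−ρ_i) = (⟨ρ⟩ − ρ^ln)·2⟨v⟩/(ρ_{i+1}−ρ_i) + (v_{i+1}−v_i)/2, where ⟨·⟩ denotes the arithmetic mean and ρ^ln the logarithmic mean; moreover, if v_i = v_{i+1} = v̄ > 0 and ρ_{i+1} < ρ_i, then this coefficient is strictly negative. -/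

import Mathlib

lemma aux_key (t : ℝ) (ht : 1 < t) : 2 * (t - 1) < (t + 1) * Real.log t := by
  set g : ℝ → ℝ := fun x => (x + 1) * Real.log x - 2 * (x - 1) with hg
  have hder : ∀ x : ℝ, 0 < x →
      HasDerivAt g (Real.log x + (x + 1) * x⁻¹ - 2) x := by
    intro x hx
    have h1 : HasDerivAt (fun y : ℝ => y + 1) 1 x := (hasDerivAt_id x).add_const 1
    have h2 : HasDerivAt Real.log x⁻¹ x := Real.hasDerivAt_log (ne_of_gt hx)
    have h3 := h1.mul h2
    have h4 : HasDerivAt (fun y : ℝ => 2 * (y - 1)) 2 x := by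
      simpa using ((hasDerivAt_id x).sub_const 1).const_mul 2
    have := h3.sub h4
    rw [show Real.log x + (x + 1) * x⁻¹ - 2 = 1 * Real.log x + (x + 1) * x⁻¹ - 2 by ring]
    exact this
  have hlog : ∀ x : ℝ, 1 < x → 1 - x⁻¹ < Real.log x := by
    intro x hx
    have hx0 : (0:ℝ) < x := lt_trans one_pos hx
    have h1 : Real.log x⁻¹ < x⁻¹ - 1 :=
      Real.log_lt_sub_one_of_pos (inv_pos.2 hx0) (by
        intro h
        have : x = 1 := by
          field_simp at h; linarith
        linarith)
    rw [Real.log_inv] at h1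
    linarith
  have hmono : StrictMonoOn g (Set.Ici (1:ℝ)) := by
    apply strictMonoOn_of_deriv_pos (convex_Ici 1)
    · intro x hx
      have hx0 : (0:ℝ) < x := lt_of_lt_of_le one_pos hx
      exact (hder x hx0).continuousAt.continuousWithinAt
    · intro x hx
      rw [interior_Ici] at hx
      have hx1 : (1:ℝ) < x := hx
      have hx0 : (0:ℝ) < x := lt_trans one_pos hx1
      rw [(hder x hx0).deriv]
      have h1 := hlog x hx1
      have h2 : (x + 1) * x⁻¹ = 1 + x⁻¹ := by field_simp
      rw [h2]; linarith
  have h1 : g 1 < g t := hmono (Set.self_mem_Ici) (Set.mem_Ici.2 (le_of_lt ht)) ht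
  have hg1 : g 1 = 0 := by simp [hg]
  rw [hg1] at h1
  simp only [hg] at h1
  linarith

lemma logmean_lt_arith (a b : ℝ) (ha : 0 < a) (hab : a < b) :
    (b - a) / (Real.log b - Real.log a) < (a + b) / 2 := by
  have hb : 0 < b := lt_trans ha hab
  have ht : 1 < b / a := (one_lt_div ha).2 hab
  have hkey := aux_key (b / a) ht
  have hL : Real.log (b / a) = Real.log b - Real.log a := Real.log_div (ne_of_gt hb) (ne_of_gt ha)
  rw [hL] at hkey
  have hLpos : 0 < Real.log b - Real.log a := by
    have := Real.log_lt_log ha hab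
    linarith
  have hmul := mul_lt_mul_of_pos_left hkey ha
  have e1 : a * (2 * (b / a - 1)) = 2 * (b - a) := by field_simp
  have e2 : a * ((b / a + 1) * (Real.log b - Real.log a)) = (a + b) * (Real.log b - Real.log a) := by
    have : a * (b / a) = b := by field_simp
    nlinarith [this]
  rw [e1, e2] at hmul
  rw [div_lt_div_iff₀ hLpos two_pos]
  linarith

/-- The mass-flux dissipation coefficient of Chandrashekar's
entropy-conservative Euler flux relative to the central flux:
`R₁ = 2(⟨ρv⟩ − ρ^ln⟨v⟩)/(ρᵢ₊₁−ρᵢ)` satisfies the identity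
`R₁ = (⟨ρ⟩ − ρ^ln)·2⟨v⟩/(ρᵢ₊₁−ρᵢ) + (vᵢ₊₁−vᵢ)/2`; moreover, for constant
positive velocity `vᵢ = vᵢ₊₁ = v̄ > 0` and decreasing density
`ρᵢ₊₁ < ρᵢ`, this coefficient is strictly negative (anti-dissipation). -/
theorem chandrashekar_mass_dissipation_coefficient
    (ρi ρip vi vip : ℝ) (hρi : 0 < ρi) (hρip : 0 < ρip) (hne : ρi ≠ ρip)
    (ρa va ρva ρln R₁ : ℝ)
    (hρa : ρa = (ρi + ρip) / 2)
    (hva : va = (vi + vip) / 2)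
    (hρva : ρva = (ρi * vi + ρip * vip) / 2)
    (hρln : ρln = (ρip - ρi) / (Real.log ρip - Real.log ρi))
    (hR : R₁ = 2 * (ρva - ρln * va) / (ρip - ρi)) :
    R₁ = (ρa - ρln) * (2 * va) / (ρip - ρi) + (vip - vi) / 2
    ∧ (∀ vb : ℝ, vi = vb → vip = vb → 0 < vb → ρip < ρi → R₁ < 0) := by
  have hd : ρip - ρi ≠ 0 := fun h => hne (by linarith)
  constructor
  · subst hρa hva hρva hR
    field_simp
    ring
  · intro vb h1 h2 hvb hlt
    subst h1 h2
    have hlm : (ρi - ρip) / (Real.log ρi - Real.log ρip) < (ρip + ρi) / 2 :=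
      logmean_lt_arith ρip ρi hρip hlt
    have hLpos : 0 < Real.log ρi - Real.log ρip := by
      have := Real.log_lt_log hρip hlt
      linarith
    have hρln2 : ρln = (ρi - ρip) / (Real.log ρi - Real.log ρip) := by
      rw [hρln]
      rw [div_eq_div_iff (by intro h; apply ne_of_gt hLpos; linarith) (ne_of_gt hLpos)]
      ring
    have hρlns : ρln < ρa := by rw [hρln2, hρa]; linarith
    have hnum : 0 < 2 * (ρva - ρln * va) := by
      have hva' : va = vip := by rw [hva]; ring
      have hρva' : ρva = ρa * vip := by rw [hρva, hρa]; ring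
      rw [hva', hρva']
      have : 0 < (ρa - ρln) * vip := mul_pos (by linarith) hvb
      nlinarith
    rw [hR]
    exact div_neg_of_pos_of_neg hnum (by linarith)
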